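/- Let n ∈ ℕ and c₁, c₂ ∈ [0,1). Let V̄, W̄ : ℝ² → ℝ² be smooth ℤ²-periodic vector fields that are linearly independent at every point, satisfy [V̄, W̄] = 0, have det(V̄, W̄) > 0 everywhere, and satisfy ∫_{[0,1]²} det(V̄(y,z), W̄(y,z))⁻¹ dy dz = 1. Let π : ℝ³ → ℝ² be π(x,y,z) = (y,z) and let ∂x denote the constant vector field (1,0,0) on ℝ³. Then there exist smooth vector fields V, W : ℝ³ → ℝ³ such that: (i) V and W are Γ_{n,c₁,c₂}-invariant, i.e. Dγ_p(V(p)) = V(γ(p)) and Dγ_p(W(p)) = W(γ(p)) for every γ ∈ Γ_{n,c₁,c₂} and every p ∈ ℝ³; (ii) Dπ(V(p)) = V̄(π(p)) and Dπ(W(p)) = W̄(π(p)) for all p; (iii) [V, ∂x] = [W, ∂x] = 0 and [V, W] = n·∂x. Moreover, a pair of smooth vector fields (V', W') satisfies (i)–(iii) if and only if there exists a smooth closed ℤ²-periodic 1-form β on ℝ² such that V' = V + (β(V̄)∘π)·∂x and W' = W + (β(W̄)∘π)·∂x. -/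

import Mathlib

noncomputable section
open intervalIntegral MeasureTheory
open scoped ContDiff


def prim (f : ℝ × ℝ → ℝ) : ℝ × ℝ → ℝ := fun p => ∫ t in (0:ℝ)..p.2, f (p.1, t)

def pd1 (f : ℝ × ℝ → ℝ) : ℝ × ℝ → ℝ := fun q => fderiv ℝ f q (1, 0)

lemma contDiff_pd1 {f : ℝ × ℝ → ℝ} (hf : ContDiff ℝ ∞ f) : ContDiff ℝ ∞ (pd1 f) :=
  (hf.fderiv_right (by simp)).clm_apply contDiff_const


lemma prim_continuous {f : ℝ × ℝ → ℝ} (hf : Continuous f) : Continuous (prim f) := by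
  have : Continuous (Function.uncurry fun x t => f (x, t)) := by
    exact hf
  exact
    intervalIntegral.continuous_parametric_primitive_of_continuous (μ := volume) (a₀ := 0) this

def fstL : ℝ × ℝ →L[ℝ] ℝ := ContinuousLinearMap.fst ℝ ℝ ℝ
def sndL : ℝ × ℝ →L[ℝ] ℝ := ContinuousLinearMap.snd ℝ ℝ ℝ

def primL (f : ℝ × ℝ → ℝ) (p : ℝ × ℝ) : ℝ × ℝ →L[ℝ] ℝ :=
  prim (pd1 f) p • fstL + f p • sndL

lemma prim_hasFDerivAt {f : ℝ × ℝ → ℝ} (hf : ContDiff ℝ ∞ f) (p₀ : ℝ × ℝ) :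
    HasFDerivAt (prim f) (primL f p₀) p₀ := by
  obtain ⟨y₀, z₀⟩ := p₀
  have hfc : Continuous f := hf.continuous
  have hslice : ∀ (y : ℝ) (a b : ℝ), IntervalIntegrable (fun t => f (y, t)) volume a b :=
    fun y a b => (hfc.comp (continuous_const.prodMk continuous_id)).intervalIntegrable a b
  set K : ℝ → ℝ := fun y => ∫ t in (0:ℝ)..z₀, f (y, t) with hK
  set R : ℝ × ℝ → ℝ := fun p => ∫ t in z₀..p.2, f (p.1, t) with hR
  have hsplit : prim f = fun p => K p.1 + R p := by
    funext p
    rw [hK, hR]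
    simp only [prim]
    rw [integral_add_adjacent_intervals (hslice p.1 0 z₀) (hslice p.1 z₀ p.2)]
  -- derivative of K
  have hKd : HasDerivAt K (prim (pd1 f) (y₀, z₀)) y₀ := by
    have hpd1c : Continuous (pd1 f) := (contDiff_pd1 hf).continuous
    obtain ⟨C, hC⟩ : ∃ C, ∀ q ∈ (Metric.closedBall y₀ 1) ×ˢ (Set.uIcc (0:ℝ) z₀),
        ‖pd1 f q‖ ≤ C :=
      ((isCompact_closedBall y₀ 1).prod isCompact_uIcc).exists_bound_of_continuousOn
        hpd1c.norm.continuousOn |>.imp (fun C h q hq => by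
          simpa using h q hq)
    have := intervalIntegral.hasDerivAt_integral_of_dominated_loc_of_deriv_le
      (F := fun x t => f (x, t)) (F' := fun x t => pd1 f (x, t)) (x₀ := y₀)
      (a := 0) (b := z₀) (μ := volume) (bound := fun _ => C) (Metric.ball_mem_nhds y₀ one_pos)
      (Filter.Eventually.of_forall fun x =>
        ((hfc.comp (continuous_const.prodMk continuous_id)).aestronglyMeasurable))
      (hslice y₀ 0 z₀)
      ((hpd1c.comp (continuous_const.prodMk continuous_id)).aestronglyMeasurable)
      (Filter.Eventually.of_forall fun t ht x hx => by
        exact hC (x, t) ⟨Metric.ball_subset_closedBall hx, Set.uIoc_subset_uIcc ht⟩)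
      intervalIntegrable_const
      (Filter.Eventually.of_forall fun t ht x hx => by
        have h1 : HasFDerivAt f (fderiv ℝ f (x, t)) (x, t) :=
          (hf.differentiable (by simp)).differentiableAt.hasFDerivAt
        have h2 : HasDerivAt (fun u : ℝ => (u, t)) ((1:ℝ), (0:ℝ)) x :=
          (hasDerivAt_id x).prodMk (hasDerivAt_const x t)
        exact h1.comp_hasDerivAt x h2)
    exact this.2
  have hKF : HasFDerivAt (fun p : ℝ × ℝ => K p.1)
      (prim (pd1 f) (y₀, z₀) • fstL) (y₀, z₀) := by
    exact hKd.comp_hasFDerivAt (y₀, z₀) (hasFDerivAt_fst (𝕜 := ℝ) (p := ((y₀, z₀) : ℝ × ℝ)))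
  -- derivative of R
  have hRF : HasFDerivAt R (f (y₀, z₀) • sndL) (y₀, z₀) := by
    rw [hasFDerivAt_iff_isLittleO_nhds_zero]
    rw [Asymptotics.isLittleO_iff]
    intro c hc
    obtain ⟨δ, hδ, hfd⟩ := Metric.continuousAt_iff.1 hfc.continuousAt c hc
    filter_upwards [Metric.ball_mem_nhds ((0,0) : ℝ × ℝ) hδ] with h hh
    have hnh : ‖h‖ < δ := by simpa [dist_eq_norm, show ((0:ℝ), (0:ℝ)) = (0 : ℝ × ℝ) from rfl] using hh
    have hRp0 : R (y₀, z₀) = 0 := by simp [hR]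
    have hadd : ((y₀, z₀) : ℝ × ℝ) + h = (y₀ + h.1, z₀ + h.2) := rfl
    have hLval : (f (y₀, z₀) • sndL) h = f (y₀, z₀) * h.2 := by simp [sndL]
    have key : R ((y₀, z₀) + h) - R (y₀, z₀) - (f (y₀, z₀) • sndL) h
        = ∫ t in z₀..(z₀ + h.2), (f (y₀ + h.1, t) - f (y₀, z₀)) := by
      rw [hRp0, hLval, intervalIntegral.integral_sub (hslice (y₀ + h.1) z₀ (z₀ + h.2))
        intervalIntegrable_const, hadd]
      simp [hR]
      ring
    rw [key]
    have hbd : ∀ t ∈ Set.uIoc z₀ (z₀ + h.2), ‖f (y₀ + h.1, t) - f (y₀, z₀)‖ ≤ c := by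
      intro t ht
      have h1 : |t - z₀| ≤ |h.2| := by
        rcases Set.mem_uIoc.1 ht with ⟨ha, hb⟩ | ⟨ha, hb⟩ <;>
          · rw [abs_sub_le_iff]
            constructor <;> cases abs_cases h.2 <;> linarith [abs_nonneg h.2]
      have hdp : dist (y₀ + h.1, t) ((y₀, z₀) : ℝ × ℝ) < δ := by
        rw [Prod.dist_eq]
        have h2 : ‖h.1‖ ≤ ‖h‖ := norm_fst_le h
        have h3 : ‖h.2‖ ≤ ‖h‖ := norm_snd_le h
        rw [Real.norm_eq_abs] at h2 h3
        simp only [max_lt_iff, Real.dist_eq]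
        constructor
        · calc |y₀ + h.1 - y₀| = |h.1| := by ring_nf
            _ ≤ ‖h‖ := h2
            _ < δ := hnh
        · calc |t - z₀| ≤ |h.2| := h1
            _ ≤ ‖h‖ := h3
            _ < δ := hnh
      have := hfd hdp
      rw [Real.dist_eq] at this
      exact le_of_lt (by simpa [Real.norm_eq_abs] using this)
    calc ‖∫ t in z₀..(z₀ + h.2), (f (y₀ + h.1, t) - f (y₀, z₀))‖
        ≤ c * |z₀ + h.2 - z₀| := intervalIntegral.norm_integral_le_of_norm_le_const hbd
      _ ≤ c * ‖h‖ := by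
          apply mul_le_mul_of_nonneg_left _ (le_of_lt hc)
          have h3 : ‖h.2‖ ≤ ‖h‖ := norm_snd_le h
          rw [Real.norm_eq_abs] at h3
          calc |z₀ + h.2 - z₀| = |h.2| := by ring_nf
            _ ≤ ‖h‖ := h3
  have := hKF.add hRF
  rw [hsplit]
  exact this

lemma prim_contDiff_nat : ∀ (m : ℕ) (f : ℝ × ℝ → ℝ), ContDiff ℝ ∞ f →
    ContDiff ℝ (m : ℕ) (prim f) := by
  intro m
  induction m with
  | zero => exact fun f hf => contDiff_zero.2 (prim_continuous hf.continuous)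
  | succ m ih =>
    intro f hf
    have hcast : ((m + 1 : ℕ) : WithTop ℕ∞) = (m : ℕ) + 1 := by norm_cast
    rw [hcast, contDiff_succ_iff_fderiv]
    refine ⟨fun p => (prim_hasFDerivAt hf p).differentiableAt, by simp, ?_⟩
    have : fderiv ℝ (prim f) = fun p => primL f p := by
      funext p
      exact (prim_hasFDerivAt hf p).fderiv
    rw [this]
    exact ((ih (pd1 f) (contDiff_pd1 hf)).smul contDiff_const).add
      ((hf.of_le (by exact_mod_cast le_top)).smul contDiff_const)

lemma prim_contDiff {f : ℝ × ℝ → ℝ} (hf : ContDiff ℝ ∞ f) : ContDiff ℝ ∞ (prim f) :=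
  contDiff_infty.2 fun n => prim_contDiff_nat n f hf



def lie2 (V W : ℝ × ℝ → ℝ × ℝ) : ℝ × ℝ → ℝ × ℝ :=
  fun p => fderiv ℝ V p (W p) - fderiv ℝ W p (V p)

/-- directional decomposition in ℝ² -/
lemma fderiv_dir {g : ℝ × ℝ → ℝ} {p : ℝ × ℝ} (hg : DifferentiableAt ℝ g p) (v : ℝ × ℝ) :
    fderiv ℝ g p v = v.1 * fderiv ℝ g p (1, 0) + v.2 * fderiv ℝ g p (0, 1) := by
  have hv : v = v.1 • ((1:ℝ), (0:ℝ)) + v.2 • ((0:ℝ), (1:ℝ)) := by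
    ext <;> simp
  conv_lhs => rw [hv]
  rw [(fderiv ℝ g p).map_add, (fderiv ℝ g p).map_smul, (fderiv ℝ g p).map_smul]
  simp [smul_eq_mul]

lemma fderiv_comp_fst {X : ℝ × ℝ → ℝ × ℝ} {p : ℝ × ℝ} (hX : DifferentiableAt ℝ X p)
    (v : ℝ × ℝ) : fderiv ℝ (fun q => (X q).1) p v = (fderiv ℝ X p v).1 := by
  have := (hX.hasFDerivAt).fst
  rw [this.fderiv]
  rfl

lemma fderiv_comp_snd {X : ℝ × ℝ → ℝ × ℝ} {p : ℝ × ℝ} (hX : DifferentiableAt ℝ X p)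
    (v : ℝ × ℝ) : fderiv ℝ (fun q => (X q).2) p v = (fderiv ℝ X p v).2 := by
  have := (hX.hasFDerivAt).snd
  rw [this.fderiv]
  rfl

/-- The key expansion: pairing a 1-form with two vector fields. -/
lemma expansion (β₁ β₂ : ℝ × ℝ → ℝ) (X Y : ℝ × ℝ → ℝ × ℝ)
    (hβ₁ : Differentiable ℝ β₁) (hβ₂ : Differentiable ℝ β₂)
    (hX : Differentiable ℝ X) (hY : Differentiable ℝ Y) (p : ℝ × ℝ) :
    fderiv ℝ (fun q => β₁ q * (X q).1 + β₂ q * (X q).2) p (Y p)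
      - fderiv ℝ (fun q => β₁ q * (Y q).1 + β₂ q * (Y q).2) p (X p)
    = (fderiv ℝ β₁ p (0, 1) - fderiv ℝ β₂ p (1, 0))
        * ((X p).1 * (Y p).2 - (X p).2 * (Y p).1)
      + β₁ p * (lie2 X Y p).1 + β₂ p * (lie2 X Y p).2 := by
  have hX1 : DifferentiableAt ℝ (fun q => (X q).1) p :=
    (differentiable_fst.comp hX).differentiableAt
  have hX2 : DifferentiableAt ℝ (fun q => (X q).2) p :=
    (differentiable_snd.comp hX).differentiableAt
  have hY1 : DifferentiableAt ℝ (fun q => (Y q).1) p :=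
    (differentiable_fst.comp hY).differentiableAt
  have hY2 : DifferentiableAt ℝ (fun q => (Y q).2) p :=
    (differentiable_snd.comp hY).differentiableAt
  have e1 : ∀ v, fderiv ℝ (fun q => β₁ q * (X q).1 + β₂ q * (X q).2) p v
      = (β₁ p * fderiv ℝ (fun q => (X q).1) p v + (X p).1 * fderiv ℝ β₁ p v)
      + (β₂ p * fderiv ℝ (fun q => (X q).2) p v + (X p).2 * fderiv ℝ β₂ p v) := by
    intro v
    rw [fderiv_fun_add ((hβ₁ p).fun_mul hX1) ((hβ₂ p).fun_mul hX2)]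
    simp only [ContinuousLinearMap.add_apply]
    rw [fderiv_fun_mul (hβ₁ p) hX1, fderiv_fun_mul (hβ₂ p) hX2]
    simp [smul_eq_mul]
  have e2 : ∀ v, fderiv ℝ (fun q => β₁ q * (Y q).1 + β₂ q * (Y q).2) p v
      = (β₁ p * fderiv ℝ (fun q => (Y q).1) p v + (Y p).1 * fderiv ℝ β₁ p v)
      + (β₂ p * fderiv ℝ (fun q => (Y q).2) p v + (Y p).2 * fderiv ℝ β₂ p v) := by
    intro v
    rw [fderiv_fun_add ((hβ₁ p).fun_mul hY1) ((hβ₂ p).fun_mul hY2)]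
    simp only [ContinuousLinearMap.add_apply]
    rw [fderiv_fun_mul (hβ₁ p) hY1, fderiv_fun_mul (hβ₂ p) hY2]
    simp [smul_eq_mul]
  rw [e1 (Y p), e2 (X p)]
  rw [fderiv_comp_fst (hX p) (Y p), fderiv_comp_snd (hX p) (Y p),
    fderiv_comp_fst (hY p) (X p), fderiv_comp_snd (hY p) (X p),
    fderiv_dir (hβ₁ p) (Y p), fderiv_dir (hβ₂ p) (Y p),
    fderiv_dir (hβ₁ p) (X p), fderiv_dir (hβ₂ p) (X p)]
  have hl1 : (lie2 X Y p).1 = (fderiv ℝ X p (Y p)).1 - (fderiv ℝ Y p (X p)).1 := rfl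
  have hl2 : (lie2 X Y p).2 = (fderiv ℝ X p (Y p)).2 - (fderiv ℝ Y p (X p)).2 := rfl
  rw [hl1, hl2]
  ring



def affMap (φ : ℝ × ℝ → ℝ) (ψ : ℝ → ℝ) (b : ℝ) : Equiv.Perm (ℝ × ℝ × ℝ) where
  toFun p := (p.1 + φ p.2, p.2.1 + ψ p.2.2, p.2.2 + b)
  invFun p := (p.1 - φ (p.2.1 - ψ (p.2.2 - b), p.2.2 - b), p.2.1 - ψ (p.2.2 - b), p.2.2 - b)
  left_inv := by rintro ⟨x, y, z⟩; simp
  right_inv := by rintro ⟨x, y, z⟩; simp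

def Gamma (n : ℕ) (c₁ c₂ : ℝ) : Subgroup (Equiv.Perm (ℝ × ℝ × ℝ)) :=
  Subgroup.closure
    { affMap (fun _ => 1) (fun _ => 0) 0,
      affMap (fun _ => c₁) (fun _ => 1) 0,
      affMap (fun q => n * q.1 + c₂) (fun _ => 0) 1 }

def HH (n : ℕ) : Subgroup (Equiv.Perm (ℝ × ℝ × ℝ)) where
  carrier := {γ | ∃ (k l : ℤ) (r : ℝ), ∀ p : ℝ × ℝ × ℝ,
    γ p = (p.1 + (n : ℝ) * l * p.2.1 + r, p.2.1 + k, p.2.2 + l)}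
  one_mem' := ⟨0, 0, 0, fun p => by simp⟩
  mul_mem' := by
    rintro γ δ ⟨k, l, r, hγ⟩ ⟨k', l', r', hδ⟩
    refine ⟨k + k', l + l', r + r' + (n : ℝ) * l * k', fun p => ?_⟩
    rw [Equiv.Perm.mul_apply, hδ, hγ]
    refine Prod.ext ?_ (Prod.ext ?_ ?_) <;> simp <;> push_cast <;> ring
  inv_mem' := by
    rintro γ ⟨k, l, r, hγ⟩
    refine ⟨-k, -l, (n : ℝ) * l * k - r, fun p => ?_⟩
    have key : γ (p.1 + (n : ℝ) * (-l : ℤ) * p.2.1 + ((n : ℝ) * l * k - r),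
        p.2.1 + (-k : ℤ), p.2.2 + (-l : ℤ)) = p := by
      rw [hγ]
      refine Prod.ext ?_ (Prod.ext ?_ ?_) <;> simp <;> push_cast <;> ring
    calc γ⁻¹ p = γ⁻¹ (γ (p.1 + (n : ℝ) * (-l : ℤ) * p.2.1 + ((n : ℝ) * l * k - r),
        p.2.1 + (-k : ℤ), p.2.2 + (-l : ℤ))) := by rw [key]
      _ = _ := Equiv.symm_apply_apply γ _

lemma gamma_le_HH (n : ℕ) (c₁ c₂ : ℝ) : Gamma n c₁ c₂ ≤ HH n := by
  rw [Gamma, Subgroup.closure_le]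
  rintro γ hγ
  simp only [Set.mem_insert_iff, Set.mem_singleton_iff] at hγ
  rcases hγ with rfl | rfl | rfl
  · exact ⟨0, 0, 1, fun p => by simp [affMap]⟩
  · exact ⟨1, 0, c₁, fun p => by simp [affMap]⟩
  · exact ⟨0, 1, c₂, fun p => by simp [affMap]; ring⟩

def transL (c : ℝ) : (ℝ × ℝ × ℝ) →L[ℝ] (ℝ × ℝ × ℝ) :=
  (ContinuousLinearMap.fst ℝ ℝ (ℝ × ℝ) +
    c • ((ContinuousLinearMap.fst ℝ ℝ ℝ).comp (ContinuousLinearMap.snd ℝ ℝ (ℝ × ℝ)))).prod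
    (ContinuousLinearMap.snd ℝ ℝ (ℝ × ℝ))

@[simp] lemma transL_apply (c : ℝ) (v : ℝ × ℝ × ℝ) :
    transL c v = (v.1 + c * v.2.1, v.2) := rfl

lemma fderiv_of_affine {γ : Equiv.Perm (ℝ × ℝ × ℝ)} {c r k l : ℝ}
    (h : ∀ p : ℝ × ℝ × ℝ, γ p = (p.1 + c * p.2.1 + r, p.2.1 + k, p.2.2 + l))
    (p : ℝ × ℝ × ℝ) : fderiv ℝ (⇑γ) p = transL c := by
  have hfn : ⇑γ = fun p : ℝ × ℝ × ℝ => transL c p + ((r, k, l) : ℝ × ℝ × ℝ) := by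
    funext q
    rw [h q]
    refine Prod.ext ?_ (Prod.ext ?_ ?_) <;> simp [transL] <;> ring
  rw [hfn]
  exact (((transL c).hasFDerivAt).add_const _).fderiv

def lie3 (V W : ℝ × ℝ × ℝ → ℝ × ℝ × ℝ) : ℝ × ℝ × ℝ → ℝ × ℝ × ℝ :=
  fun p => fderiv ℝ V p (W p) - fderiv ℝ W p (V p)

def GammaInvariant (n : ℕ) (c₁ c₂ : ℝ) (V : ℝ × ℝ × ℝ → ℝ × ℝ × ℝ) : Prop :=
  ∀ γ ∈ Gamma n c₁ c₂, ∀ p : ℝ × ℝ × ℝ, fderiv ℝ (⇑γ) p (V p) = V (γ p)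

def LiftConds (n : ℕ) (c₁ c₂ : ℝ) (Vb Wb : ℝ × ℝ → ℝ × ℝ)
    (V W : ℝ × ℝ × ℝ → ℝ × ℝ × ℝ) : Prop :=
  ContDiff ℝ (⊤ : ℕ∞) V ∧ ContDiff ℝ (⊤ : ℕ∞) W ∧
  GammaInvariant n c₁ c₂ V ∧ GammaInvariant n c₁ c₂ W ∧
  (∀ p : ℝ × ℝ × ℝ, (V p).2 = Vb p.2) ∧ (∀ p : ℝ × ℝ × ℝ, (W p).2 = Wb p.2) ∧
  (lie3 V (fun _ => (1, 0, 0)) = fun _ => 0) ∧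
  (lie3 W (fun _ => (1, 0, 0)) = fun _ => 0) ∧
  (lie3 V W = fun _ => ((n : ℝ), 0, 0))

def snd3 : (ℝ × ℝ × ℝ) →L[ℝ] (ℝ × ℝ) := ContinuousLinearMap.snd ℝ ℝ (ℝ × ℝ)

def mkV (A : ℝ × ℝ → ℝ) (X : ℝ × ℝ → ℝ × ℝ) : ℝ × ℝ × ℝ → ℝ × ℝ × ℝ :=
  fun p => (A p.2, X p.2)

lemma mkV_contDiff {A : ℝ × ℝ → ℝ} {X : ℝ × ℝ → ℝ × ℝ}
    (hA : ContDiff ℝ ∞ A) (hX : ContDiff ℝ ∞ X) : ContDiff ℝ ∞ (mkV A X) :=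
  (hA.comp contDiff_snd).prodMk (hX.comp contDiff_snd)

lemma mkV_hasFDerivAt {A : ℝ × ℝ → ℝ} {X : ℝ × ℝ → ℝ × ℝ}
    (hA : Differentiable ℝ A) (hX : Differentiable ℝ X) (p : ℝ × ℝ × ℝ) :
    HasFDerivAt (mkV A X)
      (((fderiv ℝ A p.2).comp snd3).prod ((fderiv ℝ X p.2).comp snd3)) p :=
  HasFDerivAt.prodMk (((hA p.2).hasFDerivAt).comp p hasFDerivAt_snd)
    (((hX p.2).hasFDerivAt).comp p hasFDerivAt_snd)

lemma fderiv_mkV {A : ℝ × ℝ → ℝ} {X : ℝ × ℝ → ℝ × ℝ}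
    (hA : Differentiable ℝ A) (hX : Differentiable ℝ X) (p : ℝ × ℝ × ℝ) (v : ℝ × ℝ × ℝ) :
    fderiv ℝ (mkV A X) p v = (fderiv ℝ A p.2 v.2, fderiv ℝ X p.2 v.2) := by
  rw [(mkV_hasFDerivAt hA hX p).fderiv]; rfl

lemma lie3_mkV {A B : ℝ × ℝ → ℝ} {X Y : ℝ × ℝ → ℝ × ℝ}
    (hA : Differentiable ℝ A) (hB : Differentiable ℝ B)
    (hX : Differentiable ℝ X) (hY : Differentiable ℝ Y) (p : ℝ × ℝ × ℝ) :
    lie3 (mkV A X) (mkV B Y) p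
      = (fderiv ℝ A p.2 (Y p.2) - fderiv ℝ B p.2 (X p.2), lie2 X Y p.2) := by
  show fderiv ℝ (mkV A X) p (mkV B Y p) - fderiv ℝ (mkV B Y) p (mkV A X p) = _
  rw [fderiv_mkV hA hX p, fderiv_mkV hB hY p]
  rfl

lemma lie3_mkV_dx {A : ℝ × ℝ → ℝ} {X : ℝ × ℝ → ℝ × ℝ}
    (hA : Differentiable ℝ A) (hX : Differentiable ℝ X) :
    lie3 (mkV A X) (fun _ => ((1:ℝ), (0:ℝ), (0:ℝ))) = fun _ => 0 := by
  funext p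
  show fderiv ℝ (mkV A X) p ((1:ℝ), (0:ℝ), (0:ℝ))
    - fderiv ℝ (fun _ => ((1:ℝ), (0:ℝ), (0:ℝ))) p (mkV A X p) = 0
  rw [fderiv_mkV hA hX p, fderiv_fun_const]
  show ((fderiv ℝ A p.2 (0, 0), fderiv ℝ X p.2 (0, 0)) : ℝ × ℝ × ℝ)
    - (0 : (ℝ × ℝ × ℝ) →L[ℝ] ℝ × ℝ × ℝ) (mkV A X p) = 0
  have h0 : ((0,0) : ℝ × ℝ) = 0 := rfl
  rw [h0, (fderiv ℝ A p.2).map_zero, (fderiv ℝ X p.2).map_zero]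
  simp

/-- integer-periodicity in second variable from unit periodicity -/
lemma per_int_z {α : Type*} (F : ℝ × ℝ → α) (h2 : ∀ y z : ℝ, F (y, z + 1) = F (y, z)) :
    ∀ (l : ℤ) (y z : ℝ), F (y, z + l) = F (y, z) := by
  intro l
  induction l using Int.induction_on with
  | zero => intro y z; simp
  | succ m ih =>
    intro y z
    have e : z + ((m + 1 : ℤ) : ℝ) = (z + (m : ℤ)) + 1 := by push_cast; ring
    rw [e, h2, ih]
  | pred m ih =>
    intro y z
    have e : z + ((-(m : ℤ) - 1 : ℤ) : ℝ) = (z + ((-(m : ℤ) : ℤ) : ℝ)) - 1 := by push_cast; ring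
    rw [e]
    have h := h2 y ((z + ((-(m : ℤ) : ℤ) : ℝ)) - 1)
    rw [sub_add_cancel] at h
    exact h.symm.trans (ih y z)

lemma per_int_y {α : Type*} (F : ℝ × ℝ → α) (h1 : ∀ y z : ℝ, F (y + 1, z) = F (y, z)) :
    ∀ (k : ℤ) (y z : ℝ), F (y + k, z) = F (y, z) := by
  intro k y z
  have := per_int_z (fun q : ℝ × ℝ => F (q.2, q.1)) (fun a b => h1 b a) k z y
  simpa using this

lemma per_int {α : Type*} (F : ℝ × ℝ → α) (h1 : ∀ y z : ℝ, F (y + 1, z) = F (y, z))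
    (h2 : ∀ y z : ℝ, F (y, z + 1) = F (y, z)) :
    ∀ (k l : ℤ) (y z : ℝ), F (y + k, z + l) = F (y, z) := by
  intro k l y z
  rw [per_int_y F h1 k y (z + l), per_int_z F h2 l y z]

/-- integer shift behaviour of the twisted function A -/
lemma shiftA_int (n : ℕ) (A : ℝ × ℝ → ℝ) (X : ℝ × ℝ → ℝ × ℝ)
    (h1 : ∀ y z : ℝ, A (y + 1, z) = A (y, z))
    (h2 : ∀ y z : ℝ, A (y, z + 1) = A (y, z) + (n : ℝ) * (X (y, z)).1)
    (hX2 : ∀ y z : ℝ, X (y, z + 1) = X (y, z)) :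
    ∀ (k l : ℤ) (y z : ℝ), A (y + k, z + l) = A (y, z) + (n : ℝ) * (l : ℝ) * (X (y, z)).1 := by
  have hz : ∀ (l : ℤ) (y z : ℝ), A (y, z + l) = A (y, z) + (n : ℝ) * (l : ℝ) * (X (y, z)).1 := by
    intro l
    induction l using Int.induction_on with
    | zero => intro y z; simp
    | succ m ih =>
      intro y z
      have e : z + ((m + 1 : ℤ) : ℝ) = (z + (m : ℤ)) + 1 := by push_cast; ring
      rw [e, h2, ih, per_int_z X hX2 m y z]
      push_cast; ring
    | pred m ih =>
      intro y z
      have e : z + ((-(m : ℤ) - 1 : ℤ) : ℝ) = (z + ((-(m : ℤ) : ℤ) : ℝ)) - 1 := by push_cast; ring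
      rw [e]
      have h := h2 y ((z + ((-(m : ℤ) : ℤ) : ℝ)) - 1)
      rw [sub_add_cancel] at h
      have hXper : X (y, (z + ((-(m : ℤ) : ℤ) : ℝ)) - 1) = X (y, z) := by
        have e2 : (z + ((-(m : ℤ) : ℤ) : ℝ)) - 1 = z + ((-(m : ℤ) - 1 : ℤ) : ℝ) := by
          push_cast; ring
        rw [e2, per_int_z X hX2]
      rw [hXper] at h
      have := ih y z
      rw [this] at h
      have : A (y, (z + ((-(m : ℤ) : ℤ) : ℝ)) - 1)
          = A (y, z) + (n : ℝ) * (((-(m : ℤ) : ℤ)) : ℝ) * (X (y, z)).1 - (n : ℝ) * (X (y, z)).1 := by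
        linarith [h]
      rw [this]
      push_cast; ring
  intro k l y z
  rw [per_int_y A h1 k y (z + l), hz l y z]

section Master

variable (n : ℕ) (c₁ c₂ : ℝ) (Vb Wb : ℝ × ℝ → ℝ × ℝ)

lemma bracketAux (hVbs : ContDiff ℝ (⊤ : ℕ∞) Vb) (hWbs : ContDiff ℝ (⊤ : ℕ∞) Wb)
    (hcomm : lie2 Vb Wb = fun _ => 0)
    (hdet : ∀ p : ℝ × ℝ, 0 < (Vb p).1 * (Wb p).2 - (Vb p).2 * (Wb p).1)
    (δ₁ δ₂ : ℝ × ℝ → ℝ) (hδ₁s : ContDiff ℝ ∞ δ₁) (hδ₂s : ContDiff ℝ ∞ δ₂)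
    (hQ : ∀ p : ℝ × ℝ, fderiv ℝ δ₁ p (0, 1) - fderiv ℝ δ₂ p (1, 0)
      = (n : ℝ) * ((Vb p).1 * (Wb p).2 - (Vb p).2 * (Wb p).1)⁻¹) (q : ℝ × ℝ) :
    fderiv ℝ (fun q => δ₁ q * (Vb q).1 + δ₂ q * (Vb q).2) q (Wb q)
      - fderiv ℝ (fun q => δ₁ q * (Wb q).1 + δ₂ q * (Wb q).2) q (Vb q) = (n : ℝ) := by
  rw [expansion δ₁ δ₂ Vb Wb (hδ₁s.differentiable (by simp)) (hδ₂s.differentiable (by simp))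
    (hVbs.differentiable (by simp)) (hWbs.differentiable (by simp)) q]
  rw [hQ q, congrFun hcomm q]
  have hne : (Vb q).1 * (Wb q).2 - (Vb q).2 * (Wb q).1 ≠ 0 := (hdet q).ne'
  field_simp
  simp

lemma master (hVbs : ContDiff ℝ (⊤ : ℕ∞) Vb) (hWbs : ContDiff ℝ (⊤ : ℕ∞) Wb)
    (hVbper : ∀ y z : ℝ, Vb (y + 1, z) = Vb (y, z) ∧ Vb (y, z + 1) = Vb (y, z))
    (hWbper : ∀ y z : ℝ, Wb (y + 1, z) = Wb (y, z) ∧ Wb (y, z + 1) = Wb (y, z))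
    (hcomm : lie2 Vb Wb = fun _ => 0)
    (hdet : ∀ p : ℝ × ℝ, 0 < (Vb p).1 * (Wb p).2 - (Vb p).2 * (Wb p).1)
    (δ₁ δ₂ : ℝ × ℝ → ℝ) (hδ₁s : ContDiff ℝ ∞ δ₁) (hδ₂s : ContDiff ℝ ∞ δ₂)
    (hδ₁y : ∀ y z : ℝ, δ₁ (y + 1, z) = δ₁ (y, z))
    (hδ₁z : ∀ y z : ℝ, δ₁ (y, z + 1) = δ₁ (y, z) + n)
    (hδ₂y : ∀ y z : ℝ, δ₂ (y + 1, z) = δ₂ (y, z))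
    (hδ₂z : ∀ y z : ℝ, δ₂ (y, z + 1) = δ₂ (y, z))
    (hQ : ∀ p : ℝ × ℝ, fderiv ℝ δ₁ p (0, 1) - fderiv ℝ δ₂ p (1, 0)
      = (n : ℝ) * ((Vb p).1 * (Wb p).2 - (Vb p).2 * (Wb p).1)⁻¹) :
    LiftConds n c₁ c₂ Vb Wb (mkV (fun q => δ₁ q * (Vb q).1 + δ₂ q * (Vb q).2) Vb)
      (mkV (fun q => δ₁ q * (Wb q).1 + δ₂ q * (Wb q).2) Wb) := by
  have hVb1 : ContDiff ℝ ∞ (fun q => (Vb q).1) := contDiff_fst.comp hVbs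
  have hVb2 : ContDiff ℝ ∞ (fun q => (Vb q).2) := contDiff_snd.comp hVbs
  have hWb1 : ContDiff ℝ ∞ (fun q => (Wb q).1) := contDiff_fst.comp hWbs
  have hWb2 : ContDiff ℝ ∞ (fun q => (Wb q).2) := contDiff_snd.comp hWbs
  have hAVs : ContDiff ℝ ∞ (fun q => δ₁ q * (Vb q).1 + δ₂ q * (Vb q).2) :=
    (hδ₁s.mul hVb1).add (hδ₂s.mul hVb2)
  have hAWs : ContDiff ℝ ∞ (fun q => δ₁ q * (Wb q).1 + δ₂ q * (Wb q).2) :=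
    (hδ₁s.mul hWb1).add (hδ₂s.mul hWb2)
  have hAVd := hAVs.differentiable (by simp)
  have hAWd := hAWs.differentiable (by simp)
  have hVbd := hVbs.differentiable (by simp)
  have hWbd := hWbs.differentiable (by simp)
  -- invariance helper
  have inv : ∀ (A : ℝ × ℝ → ℝ) (X : ℝ × ℝ → ℝ × ℝ),
      (∀ y z : ℝ, A (y + 1, z) = A (y, z)) →
      (∀ y z : ℝ, A (y, z + 1) = A (y, z) + (n : ℝ) * (X (y, z)).1) →
      (∀ y z : ℝ, X (y + 1, z) = X (y, z)) →
      (∀ y z : ℝ, X (y, z + 1) = X (y, z)) →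
      GammaInvariant n c₁ c₂ (mkV A X) := by
    intro A X hA1 hA2 hX1 hX2 γ hγ p
    obtain ⟨k, l, r, hform⟩ := gamma_le_HH n c₁ c₂ hγ
    rw [fderiv_of_affine hform p, transL_apply, hform p]
    have e1 := shiftA_int n A X hA1 hA2 hX2 k l p.2.1 p.2.2
    have e2 := per_int X hX1 hX2 k l p.2.1 p.2.2
    refine Prod.ext ?_ ?_
    · show (mkV A X p).1 + (n : ℝ) * (l : ℝ) * (mkV A X p).2.1 = _
      simp only [mkV]
      rw [e1]
    · show (mkV A X p).2 = X (p.2.1 + (k : ℝ), p.2.2 + (l : ℝ))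
      simp only [mkV]
      rw [e2]
  have hAV1 : ∀ y z : ℝ, (fun q => δ₁ q * (Vb q).1 + δ₂ q * (Vb q).2) (y + 1, z)
      = (fun q => δ₁ q * (Vb q).1 + δ₂ q * (Vb q).2) (y, z) := by
    intro y z
    simp only
    rw [hδ₁y, hδ₂y, (hVbper y z).1]
  have hAV2 : ∀ y z : ℝ, (fun q => δ₁ q * (Vb q).1 + δ₂ q * (Vb q).2) (y, z + 1)
      = (fun q => δ₁ q * (Vb q).1 + δ₂ q * (Vb q).2) (y, z) + (n : ℝ) * (Vb (y, z)).1 := by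
    intro y z
    simp only
    rw [hδ₁z, hδ₂z, (hVbper y z).2]
    ring
  have hAW1 : ∀ y z : ℝ, (fun q => δ₁ q * (Wb q).1 + δ₂ q * (Wb q).2) (y + 1, z)
      = (fun q => δ₁ q * (Wb q).1 + δ₂ q * (Wb q).2) (y, z) := by
    intro y z
    simp only
    rw [hδ₁y, hδ₂y, (hWbper y z).1]
  have hAW2 : ∀ y z : ℝ, (fun q => δ₁ q * (Wb q).1 + δ₂ q * (Wb q).2) (y, z + 1)
      = (fun q => δ₁ q * (Wb q).1 + δ₂ q * (Wb q).2) (y, z) + (n : ℝ) * (Wb (y, z)).1 := by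
    intro y z
    simp only
    rw [hδ₁z, hδ₂z, (hWbper y z).2]
    ring
  refine ⟨mkV_contDiff hAVs hVbs, mkV_contDiff hAWs hWbs,
    inv _ _ hAV1 hAV2 (fun y z => (hVbper y z).1) (fun y z => (hVbper y z).2),
    inv _ _ hAW1 hAW2 (fun y z => (hWbper y z).1) (fun y z => (hWbper y z).2),
    fun p => rfl, fun p => rfl,
    lie3_mkV_dx hAVd hVbd, lie3_mkV_dx hAWd hWbd, ?_⟩
  funext p
  rw [lie3_mkV hAVd hAWd hVbd hWbd p]
  refine Prod.ext ?_ ?_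
  · exact bracketAux n Vb Wb hVbs hWbs hcomm hdet δ₁ δ₂ hδ₁s hδ₂s hQ p.2
  · show lie2 Vb Wb p.2 = ((0 : ℝ), (0 : ℝ))
    rw [congrFun hcomm p.2]
    rfl

end Master

section Construction

variable (n : ℕ) (Vb Wb : ℝ × ℝ → ℝ × ℝ)

def gD : ℝ × ℝ → ℝ := fun q => ((Vb q).1 * (Wb q).2 - (Vb q).2 * (Wb q).1)⁻¹
def kfD : ℝ → ℝ := fun y => prim (gD Vb Wb) (y, 1)
def bb1 : ℝ × ℝ → ℝ := fun p => prim (gD Vb Wb) p + p.2 * (1 - kfD Vb Wb p.1)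
def bb2 : ℝ × ℝ → ℝ := fun p => p.1 - prim (fun q => kfD Vb Wb q.2) (0, p.1)

variable (hVbs : ContDiff ℝ (⊤ : ℕ∞) Vb) (hWbs : ContDiff ℝ (⊤ : ℕ∞) Wb)
    (hVbper : ∀ y z : ℝ, Vb (y + 1, z) = Vb (y, z) ∧ Vb (y, z + 1) = Vb (y, z))
    (hWbper : ∀ y z : ℝ, Wb (y + 1, z) = Wb (y, z) ∧ Wb (y, z + 1) = Wb (y, z))
    (hdet : ∀ p : ℝ × ℝ, 0 < (Vb p).1 * (Wb p).2 - (Vb p).2 * (Wb p).1)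

include hVbs hWbs hdet in
lemma gD_smooth : ContDiff ℝ ∞ (gD Vb Wb) := by
  have hVb1 : ContDiff ℝ ∞ (fun q => (Vb q).1) := contDiff_fst.comp hVbs
  have hVb2 : ContDiff ℝ ∞ (fun q => (Vb q).2) := contDiff_snd.comp hVbs
  have hWb1 : ContDiff ℝ ∞ (fun q => (Wb q).1) := contDiff_fst.comp hWbs
  have hWb2 : ContDiff ℝ ∞ (fun q => (Wb q).2) := contDiff_snd.comp hWbs
  exact ((hVb1.mul hWb2).sub (hVb2.mul hWb1)).inv (fun q => (hdet q).ne')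

include hVbper hWbper in
lemma gD_pery : ∀ y z : ℝ, gD Vb Wb (y + 1, z) = gD Vb Wb (y, z) := by
  intro y z; simp only [gD]; rw [(hVbper y z).1, (hWbper y z).1]

include hVbper hWbper in
lemma gD_perz : ∀ y z : ℝ, gD Vb Wb (y, z + 1) = gD Vb Wb (y, z) := by
  intro y z; simp only [gD]; rw [(hVbper y z).2, (hWbper y z).2]

include hVbper hWbper in
lemma kfD_per : ∀ y : ℝ, kfD Vb Wb (y + 1) = kfD Vb Wb y := by
  intro y
  simp only [kfD, prim]
  apply intervalIntegral.integral_congr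
  intro t _
  exact gD_pery Vb Wb hVbper hWbper y t

include hVbs hWbs hdet in
lemma kfD_smooth : ContDiff ℝ ∞ (kfD Vb Wb) :=
  (prim_contDiff (gD_smooth Vb Wb hVbs hWbs hdet)).comp (contDiff_id.prodMk contDiff_const)

include hVbs hWbs hdet in
lemma bb1_smooth : ContDiff ℝ ∞ (bb1 Vb Wb) :=
  (prim_contDiff (gD_smooth Vb Wb hVbs hWbs hdet)).add
    (contDiff_snd.mul (contDiff_const.sub
      ((kfD_smooth Vb Wb hVbs hWbs hdet).comp contDiff_fst)))

include hVbs hWbs hdet in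
lemma bb2_smooth : ContDiff ℝ ∞ (bb2 Vb Wb) :=
  contDiff_fst.sub ((prim_contDiff ((kfD_smooth Vb Wb hVbs hWbs hdet).comp
    contDiff_snd)).comp (contDiff_const.prodMk contDiff_fst))

include hVbs hWbs hdet hVbper hWbper in
lemma bb1_pery : ∀ y z : ℝ, bb1 Vb Wb (y + 1, z) = bb1 Vb Wb (y, z) := by
  intro y z
  simp only [bb1]
  rw [kfD_per Vb Wb hVbper hWbper y]
  congr 1
  simp only [prim]
  apply intervalIntegral.integral_congr
  intro t _
  exact gD_pery Vb Wb hVbper hWbper y t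

include hVbs hWbs hdet hVbper hWbper in
lemma bb1_shiftz : ∀ y z : ℝ, bb1 Vb Wb (y, z + 1) = bb1 Vb Wb (y, z) + 1 := by
  intro y z
  have hgc : Continuous (fun t => gD Vb Wb (y, t)) :=
    ((gD_smooth Vb Wb hVbs hWbs hdet).continuous).comp
      (continuous_const.prodMk continuous_id)
  have hint : ∀ a b : ℝ, IntervalIntegrable (fun t => gD Vb Wb (y, t)) MeasureTheory.volume a b :=
    fun a b => hgc.intervalIntegrable a b
  have hper : Function.Periodic (fun t => gD Vb Wb (y, t)) 1 :=
    fun t => gD_perz Vb Wb hVbper hWbper y t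
  have hsplit : prim (gD Vb Wb) (y, z + 1)
      = prim (gD Vb Wb) (y, z) + ∫ t in z..(z + 1), gD Vb Wb (y, t) := by
    simp only [prim]
    rw [← intervalIntegral.integral_add_adjacent_intervals (hint 0 z) (hint z (z + 1))]
  have hone : (∫ t in z..(z + 1), gD Vb Wb (y, t)) = kfD Vb Wb y := by
    have := hper.intervalIntegral_add_eq z 0
    rw [this]
    simp only [kfD, prim, zero_add]
  simp only [bb1]
  rw [hsplit, hone]
  ring

lemma bb2_perz : ∀ y z : ℝ, bb2 Vb Wb (y, z + 1) = bb2 Vb Wb (y, z) := fun _ _ => rfl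

include hVbs hWbs hdet hVbper hWbper in
lemma bb2_pery
    (hvol : (∫ y in (0:ℝ)..1, ∫ z in (0:ℝ)..1,
        ((Vb (y, z)).1 * (Wb (y, z)).2 - (Vb (y, z)).2 * (Wb (y, z)).1)⁻¹) = 1) :
    ∀ y z : ℝ, bb2 Vb Wb (y + 1, z) = bb2 Vb Wb (y, z) := by
  intro y z
  have hkfc : Continuous (kfD Vb Wb) := (kfD_smooth Vb Wb hVbs hWbs hdet).continuous
  have hint : ∀ a b : ℝ, IntervalIntegrable (kfD Vb Wb) MeasureTheory.volume a b :=
    fun a b => hkfc.intervalIntegrable a b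
  have hper : Function.Periodic (kfD Vb Wb) 1 := fun t => kfD_per Vb Wb hVbper hWbper t
  have hvol' : (∫ u in (0:ℝ)..1, kfD Vb Wb u) = 1 := by
    have he : (∫ u in (0:ℝ)..1, kfD Vb Wb u) = ∫ y in (0:ℝ)..1, ∫ z in (0:ℝ)..1,
        ((Vb (y, z)).1 * (Wb (y, z)).2 - (Vb (y, z)).2 * (Wb (y, z)).1)⁻¹ := by
      apply intervalIntegral.integral_congr
      intro u _
      simp only [kfD, prim, gD]
    rw [he, hvol]
  have hsplit : prim (fun q => kfD Vb Wb q.2) (0, y + 1)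
      = prim (fun q => kfD Vb Wb q.2) (0, y) + ∫ u in y..(y + 1), kfD Vb Wb u := by
    simp only [prim]
    rw [← intervalIntegral.integral_add_adjacent_intervals (hint 0 y) (hint y (y + 1))]
  have hone : (∫ u in y..(y + 1), kfD Vb Wb u) = 1 := by
    rw [hper.intervalIntegral_add_eq y 0, zero_add, hvol']
  simp only [bb2]
  rw [hsplit, hone]
  ring

end Construction

section ConstructionDeriv

variable (n : ℕ) (Vb Wb : ℝ × ℝ → ℝ × ℝ)
variable (hVbs : ContDiff ℝ (⊤ : ℕ∞) Vb) (hWbs : ContDiff ℝ (⊤ : ℕ∞) Wb)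
    (hdet : ∀ p : ℝ × ℝ, 0 < (Vb p).1 * (Wb p).2 - (Vb p).2 * (Wb p).1)

include hVbs hWbs hdet in
lemma bb1_fderiv_z (p : ℝ × ℝ) :
    fderiv ℝ (bb1 Vb Wb) p (0, 1) = gD Vb Wb p + (1 - kfD Vb Wb p.1) := by
  have hg := gD_smooth Vb Wb hVbs hWbs hdet
  have hkf := kfD_smooth Vb Wb hVbs hWbs hdet
  set cc : ℝ → ℝ := fun y => 1 - kfD Vb Wb y with hcc
  have hccd : Differentiable ℝ cc := (contDiff_const.sub hkf).differentiable (by simp)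
  have hccF : HasFDerivAt (cc ∘ Prod.fst) ((deriv cc p.1) • fstL) p :=
    HasDerivAt.comp_hasFDerivAt (h₂ := cc) p ((hccd p.1).hasDerivAt) hasFDerivAt_fst
  have hccF' : HasFDerivAt (fun q : ℝ × ℝ => cc q.1) ((deriv cc p.1) • fstL) p := hccF
  have he : HasFDerivAt (fun q : ℝ × ℝ => q.2 * cc q.1)
      ((p.2 : ℝ) • ((deriv cc p.1) • fstL) + cc p.1 • ContinuousLinearMap.snd ℝ ℝ ℝ) p :=
    (hasFDerivAt_snd).mul hccF'
  have hb : HasFDerivAt (bb1 Vb Wb)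
      (primL (gD Vb Wb) p + ((p.2 : ℝ) • ((deriv cc p.1) • fstL)
        + cc p.1 • ContinuousLinearMap.snd ℝ ℝ ℝ)) p :=
    (prim_hasFDerivAt hg p).add he
  rw [hb.fderiv]
  simp [primL, fstL, sndL, cc]

include hVbs hWbs hdet in
lemma bb2_fderiv_y (p : ℝ × ℝ) :
    fderiv ℝ (bb2 Vb Wb) p (1, 0) = 1 - kfD Vb Wb p.1 := by
  have hkf := kfD_smooth Vb Wb hVbs hWbs hdet
  have hkk : ContDiff ℝ ∞ (fun q : ℝ × ℝ => kfD Vb Wb q.2) := hkf.comp contDiff_snd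
  set mL : ℝ × ℝ →L[ℝ] ℝ × ℝ := (0 : ℝ × ℝ →L[ℝ] ℝ).prod fstL with hmL
  have hcomp : HasFDerivAt (fun q : ℝ × ℝ => prim (fun q : ℝ × ℝ => kfD Vb Wb q.2) (0, q.1))
      ((primL (fun q : ℝ × ℝ => kfD Vb Wb q.2) (0, p.1)).comp mL) p := by
    have h1 := prim_hasFDerivAt hkk ((0 : ℝ), p.1)
    have h2 : HasFDerivAt (fun q : ℝ × ℝ => ((0 : ℝ), q.1)) mL p := mL.hasFDerivAt
    exact h1.comp p h2
  have hb : HasFDerivAt (bb2 Vb Wb)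
      (fstL - (primL (fun q : ℝ × ℝ => kfD Vb Wb q.2) ((0 : ℝ), p.1)).comp mL) p :=
    hasFDerivAt_fst.sub hcomp
  rw [hb.fderiv]
  simp [primL, fstL, sndL, mL, kfD]

include hVbs hWbs hdet in
lemma construction_hQ (p : ℝ × ℝ) :
    fderiv ℝ (fun q => (n : ℝ) * bb1 Vb Wb q) p (0, 1)
      - fderiv ℝ (fun q => (n : ℝ) * bb2 Vb Wb q) p (1, 0)
    = (n : ℝ) * ((Vb p).1 * (Wb p).2 - (Vb p).2 * (Wb p).1)⁻¹ := by
  have h1 : DifferentiableAt ℝ (bb1 Vb Wb) p :=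
    ((bb1_smooth Vb Wb hVbs hWbs hdet).differentiable (by simp)) p
  have h2 : DifferentiableAt ℝ (bb2 Vb Wb) p :=
    ((bb2_smooth Vb Wb hVbs hWbs hdet).differentiable (by simp)) p
  rw [fderiv_const_mul h1, fderiv_const_mul h2]
  simp only [ContinuousLinearMap.smul_apply, smul_eq_mul]
  rw [bb1_fderiv_z Vb Wb hVbs hWbs hdet p, bb2_fderiv_y Vb Wb hVbs hWbs hdet p]
  show (n : ℝ) * (gD Vb Wb p + (1 - kfD Vb Wb p.1)) - (n : ℝ) * (1 - kfD Vb Wb p.1)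
    = (n : ℝ) * gD Vb Wb p
  ring

end ConstructionDeriv

section Converse

lemma xconst (V' : ℝ × ℝ × ℝ → ℝ × ℝ × ℝ) (hs : ContDiff ℝ ∞ V')
    (hdx : lie3 V' (fun _ => ((1:ℝ), (0:ℝ), (0:ℝ))) = fun _ => 0) :
    ∀ p : ℝ × ℝ × ℝ, V' p = V' (0, p.2) := by
  have hdiff : Differentiable ℝ V' := hs.differentiable (by simp)
  have hfd : ∀ p, fderiv ℝ V' p ((1:ℝ), (0:ℝ), (0:ℝ)) = 0 := by
    intro p
    have h := congrFun hdx p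
    simp only [lie3, fderiv_const] at h
    simpa using h
  rintro ⟨x, q⟩
  have hline : ∀ t : ℝ, HasDerivAt (fun t : ℝ => V' (t, q)) 0 t := by
    intro t
    have h1 : HasFDerivAt V' (fderiv ℝ V' (t, q)) (t, q) := (hdiff (t, q)).hasFDerivAt
    have h2 : HasDerivAt (fun t : ℝ => ((t, q) : ℝ × ℝ × ℝ)) ((1:ℝ), (0:ℝ), (0:ℝ)) t :=
      (hasDerivAt_id t).prodMk (hasDerivAt_const t q)
    have h3 := h1.comp_hasDerivAt t h2
    rw [hfd (t, q)] at h3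
    exact h3
  exact is_const_of_deriv_eq_zero (fun t => (hline t).differentiableAt)
    (fun t => (hline t).deriv) x 0

lemma gen2_mem (n : ℕ) (c₁ c₂ : ℝ) : affMap (fun _ => c₁) (fun _ => 1) 0 ∈ Gamma n c₁ c₂ :=
  Subgroup.subset_closure (by simp)

lemma gen3_mem (n : ℕ) (c₁ c₂ : ℝ) :
    affMap (fun q => n * q.1 + c₂) (fun _ => 0) 1 ∈ Gamma n c₁ c₂ :=
  Subgroup.subset_closure (by simp)

lemma gen2_form (c₁ : ℝ) : ∀ p : ℝ × ℝ × ℝ, (affMap (fun _ => c₁) (fun _ => 1) 0) p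
    = (p.1 + 0 * p.2.1 + c₁, p.2.1 + 1, p.2.2 + 0) := by
  intro p
  simp [affMap]

lemma gen3_form (n : ℕ) (c₂ : ℝ) : ∀ p : ℝ × ℝ × ℝ,
    (affMap (fun q => n * q.1 + c₂) (fun _ => 0) 1) p
    = (p.1 + (n : ℝ) * p.2.1 + c₂, p.2.1 + 0, p.2.2 + 1) := by
  intro p
  simp [affMap]
  ring

/-- shift consequences for a Γ-invariant field of the form mkV A X -/
lemma shifts_of_invariant (n : ℕ) (c₁ c₂ : ℝ) (A : ℝ × ℝ → ℝ) (X : ℝ × ℝ → ℝ × ℝ)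
    (hinv : GammaInvariant n c₁ c₂ (mkV A X)) :
    (∀ y z : ℝ, A (y + 1, z) = A (y, z)) ∧
    (∀ y z : ℝ, A (y, z + 1) = A (y, z) + (n : ℝ) * (X (y, z)).1) := by
  constructor
  · intro y z
    have h := hinv _ (gen2_mem n c₁ c₂) ((0 : ℝ), y, z)
    rw [fderiv_of_affine (gen2_form c₁) ((0 : ℝ), y, z), gen2_form c₁] at h
    have h1 := congrArg Prod.fst h
    simp only [transL_apply, mkV] at h1
    simpa using h1.symm
  · intro y z
    have h := hinv _ (gen3_mem n c₁ c₂) ((0 : ℝ), y, z)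
    rw [fderiv_of_affine (gen3_form n c₂) ((0 : ℝ), y, z), gen3_form n c₂] at h
    have h1 := congrArg Prod.fst h
    simp only [transL_apply, mkV] at h1
    simpa using h1.symm

end Converse

lemma converse_beta (n : ℕ) (Vb Wb : ℝ × ℝ → ℝ × ℝ)
    (hVbs : ContDiff ℝ (⊤ : ℕ∞) Vb) (hWbs : ContDiff ℝ (⊤ : ℕ∞) Wb)
    (hVbper : ∀ y z : ℝ, Vb (y + 1, z) = Vb (y, z) ∧ Vb (y, z + 1) = Vb (y, z))
    (hWbper : ∀ y z : ℝ, Wb (y + 1, z) = Wb (y, z) ∧ Wb (y, z + 1) = Wb (y, z))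
    (hcomm : lie2 Vb Wb = fun _ => 0)
    (hdet : ∀ p : ℝ × ℝ, 0 < (Vb p).1 * (Wb p).2 - (Vb p).2 * (Wb p).1)
    (δ₁ δ₂ : ℝ × ℝ → ℝ) (hδ₁s : ContDiff ℝ ∞ δ₁) (hδ₂s : ContDiff ℝ ∞ δ₂)
    (hδ₁y : ∀ y z : ℝ, δ₁ (y + 1, z) = δ₁ (y, z))
    (hδ₁z : ∀ y z : ℝ, δ₁ (y, z + 1) = δ₁ (y, z) + n)
    (hδ₂y : ∀ y z : ℝ, δ₂ (y + 1, z) = δ₂ (y, z))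
    (hδ₂z : ∀ y z : ℝ, δ₂ (y, z + 1) = δ₂ (y, z))
    (hQ : ∀ p : ℝ × ℝ, fderiv ℝ δ₁ p (0, 1) - fderiv ℝ δ₂ p (1, 0)
      = (n : ℝ) * ((Vb p).1 * (Wb p).2 - (Vb p).2 * (Wb p).1)⁻¹)
    (A' B' : ℝ × ℝ → ℝ) (hA's : ContDiff ℝ ∞ A') (hB's : ContDiff ℝ ∞ B')
    (hA'1 : ∀ y z : ℝ, A' (y + 1, z) = A' (y, z))
    (hA'2 : ∀ y z : ℝ, A' (y, z + 1) = A' (y, z) + (n : ℝ) * (Vb (y, z)).1)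
    (hB'1 : ∀ y z : ℝ, B' (y + 1, z) = B' (y, z))
    (hB'2 : ∀ y z : ℝ, B' (y, z + 1) = B' (y, z) + (n : ℝ) * (Wb (y, z)).1)
    (hbr' : ∀ q : ℝ × ℝ, fderiv ℝ A' q (Wb q) - fderiv ℝ B' q (Vb q) = (n : ℝ)) :
    ∃ β₁ β₂ : ℝ × ℝ → ℝ,
      ContDiff ℝ (⊤ : ℕ∞) β₁ ∧ ContDiff ℝ (⊤ : ℕ∞) β₂ ∧
      (∀ y z : ℝ, β₁ (y + 1, z) = β₁ (y, z) ∧ β₁ (y, z + 1) = β₁ (y, z)) ∧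
      (∀ y z : ℝ, β₂ (y + 1, z) = β₂ (y, z) ∧ β₂ (y, z + 1) = β₂ (y, z)) ∧
      (∀ p : ℝ × ℝ, fderiv ℝ β₂ p (1, 0) = fderiv ℝ β₁ p (0, 1)) ∧
      (∀ q : ℝ × ℝ, β₁ q * (Vb q).1 + β₂ q * (Vb q).2
        = A' q - (δ₁ q * (Vb q).1 + δ₂ q * (Vb q).2)) ∧
      (∀ q : ℝ × ℝ, β₁ q * (Wb q).1 + β₂ q * (Wb q).2
        = B' q - (δ₁ q * (Wb q).1 + δ₂ q * (Wb q).2)) := by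
  have hVb1 : ContDiff ℝ ∞ (fun q => (Vb q).1) := contDiff_fst.comp hVbs
  have hVb2 : ContDiff ℝ ∞ (fun q => (Vb q).2) := contDiff_snd.comp hVbs
  have hWb1 : ContDiff ℝ ∞ (fun q => (Wb q).1) := contDiff_fst.comp hWbs
  have hWb2 : ContDiff ℝ ∞ (fun q => (Wb q).2) := contDiff_snd.comp hWbs
  have hVbd : Differentiable ℝ Vb := hVbs.differentiable (by simp)
  have hWbd : Differentiable ℝ Wb := hWbs.differentiable (by simp)
  have hgDs : ContDiff ℝ ∞ (gD Vb Wb) := gD_smooth Vb Wb hVbs hWbs hdet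
  set AV : ℝ × ℝ → ℝ := fun q => δ₁ q * (Vb q).1 + δ₂ q * (Vb q).2 with hAVdef
  set AW : ℝ × ℝ → ℝ := fun q => δ₁ q * (Wb q).1 + δ₂ q * (Wb q).2 with hAWdef
  have hAVs : ContDiff ℝ ∞ AV := (hδ₁s.mul hVb1).add (hδ₂s.mul hVb2)
  have hAWs : ContDiff ℝ ∞ AW := (hδ₁s.mul hWb1).add (hδ₂s.mul hWb2)
  have hAVd := hAVs.differentiable (by simp)
  have hAWd := hAWs.differentiable (by simp)
  have hA'd := hA's.differentiable (by simp)
  have hB'd := hB's.differentiable (by simp)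
  have hAV1 : ∀ y z : ℝ, AV (y + 1, z) = AV (y, z) := by
    intro y z; rw [hAVdef]; simp only; rw [hδ₁y, hδ₂y, (hVbper y z).1]
  have hAV2 : ∀ y z : ℝ, AV (y, z + 1) = AV (y, z) + (n : ℝ) * (Vb (y, z)).1 := by
    intro y z; rw [hAVdef]; simp only; rw [hδ₁z, hδ₂z, (hVbper y z).2]; ring
  have hAW1 : ∀ y z : ℝ, AW (y + 1, z) = AW (y, z) := by
    intro y z; rw [hAWdef]; simp only; rw [hδ₁y, hδ₂y, (hWbper y z).1]
  have hAW2 : ∀ y z : ℝ, AW (y, z + 1) = AW (y, z) + (n : ℝ) * (Wb (y, z)).1 := by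
    intro y z; rw [hAWdef]; simp only; rw [hδ₁z, hδ₂z, (hWbper y z).2]; ring
  have hbrbase : ∀ q : ℝ × ℝ, fderiv ℝ AV q (Wb q) - fderiv ℝ AW q (Vb q) = (n : ℝ) := by
    intro q
    rw [hAVdef, hAWdef]
    exact bracketAux n Vb Wb hVbs hWbs hcomm hdet δ₁ δ₂ hδ₁s hδ₂s hQ q
  set gV : ℝ × ℝ → ℝ := fun q => A' q - AV q with hgVdef
  set gW : ℝ × ℝ → ℝ := fun q => B' q - AW q with hgWdef
  have hgVs : ContDiff ℝ ∞ gV := hA's.sub hAVs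
  have hgWs : ContDiff ℝ ∞ gW := hB's.sub hAWs
  have hgV1 : ∀ y z : ℝ, gV (y + 1, z) = gV (y, z) := by
    intro y z; rw [hgVdef]; simp only; rw [hA'1, hAV1]
  have hgV2 : ∀ y z : ℝ, gV (y, z + 1) = gV (y, z) := by
    intro y z; rw [hgVdef]; simp only; rw [hA'2, hAV2]; ring
  have hgW1 : ∀ y z : ℝ, gW (y + 1, z) = gW (y, z) := by
    intro y z; rw [hgWdef]; simp only; rw [hB'1, hAW1]
  have hgW2 : ∀ y z : ℝ, gW (y, z + 1) = gW (y, z) := by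
    intro y z; rw [hgWdef]; simp only; rw [hB'2, hAW2]; ring
  refine ⟨fun q => (gV q * (Wb q).2 - gW q * (Vb q).2) * gD Vb Wb q,
    fun q => (gW q * (Vb q).1 - gV q * (Wb q).1) * gD Vb Wb q, ?_, ?_, ?_, ?_, ?_, ?_, ?_⟩
  · exact ((hgVs.mul hWb2).sub (hgWs.mul hVb2)).mul hgDs
  · exact ((hgWs.mul hVb1).sub (hgVs.mul hWb1)).mul hgDs
  · intro y z
    constructor
    · simp only
      rw [hgV1, hgW1, (hVbper y z).1, (hWbper y z).1, gD_pery Vb Wb hVbper hWbper y z]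
    · simp only
      rw [hgV2, hgW2, (hVbper y z).2, (hWbper y z).2, gD_perz Vb Wb hVbper hWbper y z]
  · intro y z
    constructor
    · simp only
      rw [hgV1, hgW1, (hVbper y z).1, (hWbper y z).1, gD_pery Vb Wb hVbper hWbper y z]
    · simp only
      rw [hgV2, hgW2, (hVbper y z).2, (hWbper y z).2, gD_perz Vb Wb hVbper hWbper y z]
  · -- closedness
    have hfunV : (fun q => ((gV q * (Wb q).2 - gW q * (Vb q).2) * gD Vb Wb q) * (Vb q).1
        + ((gW q * (Vb q).1 - gV q * (Wb q).1) * gD Vb Wb q) * (Vb q).2) = gV := by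
      funext q
      have hne := (hdet q).ne'
      have hne' : (Wb q).2 * (Vb q).1 - (Vb q).2 * (Wb q).1 ≠ 0 := by rwa [mul_comm (Wb q).2]
      simp only [gD]
      field_simp
      ring
    have hfunW : (fun q => ((gV q * (Wb q).2 - gW q * (Vb q).2) * gD Vb Wb q) * (Wb q).1
        + ((gW q * (Vb q).1 - gV q * (Wb q).1) * gD Vb Wb q) * (Wb q).2) = gW := by
      funext q
      have hne := (hdet q).ne'
      have hne' : (Wb q).2 * (Vb q).1 - (Vb q).2 * (Wb q).1 ≠ 0 := by rwa [mul_comm (Wb q).2]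
      simp only [gD]
      field_simp
      ring
    intro p
    have hβ₁d : Differentiable ℝ (fun q => (gV q * (Wb q).2 - gW q * (Vb q).2) * gD Vb Wb q) :=
      (((hgVs.mul hWb2).sub (hgWs.mul hVb2)).mul hgDs).differentiable (by simp)
    have hβ₂d : Differentiable ℝ (fun q => (gW q * (Vb q).1 - gV q * (Wb q).1) * gD Vb Wb q) :=
      (((hgWs.mul hVb1).sub (hgVs.mul hWb1)).mul hgDs).differentiable (by simp)
    have hexp := expansion (fun q => (gV q * (Wb q).2 - gW q * (Vb q).2) * gD Vb Wb q)
      (fun q => (gW q * (Vb q).1 - gV q * (Wb q).1) * gD Vb Wb q) Vb Wb hβ₁d hβ₂d hVbd hWbd p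
    rw [hfunV, hfunW] at hexp
    have e1 : fderiv ℝ gV p = fderiv ℝ A' p - fderiv ℝ AV p := by
      rw [hgVdef]
      exact fderiv_sub (hA'd p) (hAVd p)
    have e2 : fderiv ℝ gW p = fderiv ℝ B' p - fderiv ℝ AW p := by
      rw [hgWdef]
      exact fderiv_sub (hB'd p) (hAWd p)
    have hLHS : fderiv ℝ gV p (Wb p) - fderiv ℝ gW p (Vb p) = 0 := by
      rw [e1, e2]
      simp only [ContinuousLinearMap.sub_apply]
      have := hbr' p
      have := hbrbase p
      linarith
    rw [hLHS, congrFun hcomm p] at hexp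
    have hD := hdet p
    have hmul : (fderiv ℝ (fun q => (gV q * (Wb q).2 - gW q * (Vb q).2) * gD Vb Wb q) p (0, 1)
        - fderiv ℝ (fun q => (gW q * (Vb q).1 - gV q * (Wb q).1) * gD Vb Wb q) p (1, 0))
        * ((Vb p).1 * (Wb p).2 - (Vb p).2 * (Wb p).1) = 0 := by
      simp only [Prod.fst_zero, Prod.snd_zero, mul_zero, add_zero, zero_mul] at hexp
      linarith [hexp]
    rcases mul_eq_zero.1 hmul with h | h
    · linarith [h]
    · exact absurd h hD.ne'
  · intro q
    have hne := (hdet q).ne'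
    have hne' : (Wb q).2 * (Vb q).1 - (Vb q).2 * (Wb q).1 ≠ 0 := by rwa [mul_comm (Wb q).2]
    show ((gV q * (Wb q).2 - gW q * (Vb q).2) * gD Vb Wb q) * (Vb q).1
        + ((gW q * (Vb q).1 - gV q * (Wb q).1) * gD Vb Wb q) * (Vb q).2 = A' q - AV q
    simp only [gD]
    field_simp
    ring
  · intro q
    have hne := (hdet q).ne'
    have hne' : (Wb q).2 * (Vb q).1 - (Vb q).2 * (Wb q).1 ≠ 0 := by rwa [mul_comm (Wb q).2]
    show ((gV q * (Wb q).2 - gW q * (Vb q).2) * gD Vb Wb q) * (Wb q).1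
        + ((gW q * (Vb q).1 - gV q * (Wb q).1) * gD Vb Wb q) * (Wb q).2 = B' q - AW q
    simp only [gD]
    field_simp
    ring

theorem stmt_7 (n : ℕ) (c₁ c₂ : ℝ)
    (hc₁ : c₁ ∈ Set.Ico (0 : ℝ) 1) (hc₂ : c₂ ∈ Set.Ico (0 : ℝ) 1)
    (Vb Wb : ℝ × ℝ → ℝ × ℝ)
    (hVbs : ContDiff ℝ (⊤ : ℕ∞) Vb) (hWbs : ContDiff ℝ (⊤ : ℕ∞) Wb)
    (hVbper : ∀ y z : ℝ, Vb (y + 1, z) = Vb (y, z) ∧ Vb (y, z + 1) = Vb (y, z))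
    (hWbper : ∀ y z : ℝ, Wb (y + 1, z) = Wb (y, z) ∧ Wb (y, z + 1) = Wb (y, z))
    (hindep : ∀ p : ℝ × ℝ, LinearIndependent ℝ ![Vb p, Wb p])
    (hcomm : lie2 Vb Wb = fun _ => 0)
    (hdet : ∀ p : ℝ × ℝ, 0 < (Vb p).1 * (Wb p).2 - (Vb p).2 * (Wb p).1)
    (hvol : (∫ y in (0:ℝ)..1, ∫ z in (0:ℝ)..1,
        ((Vb (y, z)).1 * (Wb (y, z)).2 - (Vb (y, z)).2 * (Wb (y, z)).1)⁻¹) = 1) :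
    ∃ V W : ℝ × ℝ × ℝ → ℝ × ℝ × ℝ, LiftConds n c₁ c₂ Vb Wb V W ∧
      ∀ V' W' : ℝ × ℝ × ℝ → ℝ × ℝ × ℝ,
        LiftConds n c₁ c₂ Vb Wb V' W' ↔
          ∃ β₁ β₂ : ℝ × ℝ → ℝ,
            ContDiff ℝ (⊤ : ℕ∞) β₁ ∧ ContDiff ℝ (⊤ : ℕ∞) β₂ ∧
            (∀ y z : ℝ, β₁ (y + 1, z) = β₁ (y, z) ∧ β₁ (y, z + 1) = β₁ (y, z)) ∧
            (∀ y z : ℝ, β₂ (y + 1, z) = β₂ (y, z) ∧ β₂ (y, z + 1) = β₂ (y, z)) ∧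
            (∀ p : ℝ × ℝ, fderiv ℝ β₂ p (1, 0) = fderiv ℝ β₁ p (0, 1)) ∧
            (∀ p : ℝ × ℝ × ℝ, V' p
              = V p + (β₁ p.2 * (Vb p.2).1 + β₂ p.2 * (Vb p.2).2) • ((1:ℝ), (0:ℝ), (0:ℝ))) ∧
            (∀ p : ℝ × ℝ × ℝ, W' p
              = W p + (β₁ p.2 * (Wb p.2).1 + β₂ p.2 * (Wb p.2).2) • ((1:ℝ), (0:ℝ), (0:ℝ))) := by
  have hVbd : Differentiable ℝ Vb := hVbs.differentiable (by simp)
  have hWbd : Differentiable ℝ Wb := hWbs.differentiable (by simp)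
  set δ₁ : ℝ × ℝ → ℝ := fun q => (n : ℝ) * bb1 Vb Wb q with hδ₁def
  set δ₂ : ℝ × ℝ → ℝ := fun q => (n : ℝ) * bb2 Vb Wb q with hδ₂def
  have hδ₁s : ContDiff ℝ ∞ δ₁ := contDiff_const.mul (bb1_smooth Vb Wb hVbs hWbs hdet)
  have hδ₂s : ContDiff ℝ ∞ δ₂ := contDiff_const.mul (bb2_smooth Vb Wb hVbs hWbs hdet)
  have hδ₁y : ∀ y z : ℝ, δ₁ (y + 1, z) = δ₁ (y, z) := by
    intro y z
    show (n : ℝ) * bb1 Vb Wb (y + 1, z) = (n : ℝ) * bb1 Vb Wb (y, z)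
    rw [bb1_pery Vb Wb hVbs hWbs hVbper hWbper hdet y z]
  have hδ₁z : ∀ y z : ℝ, δ₁ (y, z + 1) = δ₁ (y, z) + (n : ℝ) := by
    intro y z
    show (n : ℝ) * bb1 Vb Wb (y, z + 1) = (n : ℝ) * bb1 Vb Wb (y, z) + (n : ℝ)
    rw [bb1_shiftz Vb Wb hVbs hWbs hVbper hWbper hdet y z]
    ring
  have hδ₂y : ∀ y z : ℝ, δ₂ (y + 1, z) = δ₂ (y, z) := by
    intro y z
    show (n : ℝ) * bb2 Vb Wb (y + 1, z) = (n : ℝ) * bb2 Vb Wb (y, z)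
    rw [bb2_pery Vb Wb hVbs hWbs hVbper hWbper hdet hvol y z]
  have hδ₂z : ∀ y z : ℝ, δ₂ (y, z + 1) = δ₂ (y, z) := by
    intro y z
    show (n : ℝ) * bb2 Vb Wb (y, z + 1) = (n : ℝ) * bb2 Vb Wb (y, z)
    rw [bb2_perz Vb Wb y z]
  have hQ : ∀ p : ℝ × ℝ, fderiv ℝ δ₁ p (0, 1) - fderiv ℝ δ₂ p (1, 0)
      = (n : ℝ) * ((Vb p).1 * (Wb p).2 - (Vb p).2 * (Wb p).1)⁻¹ := by
    intro p
    rw [hδ₁def, hδ₂def]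
    exact construction_hQ n Vb Wb hVbs hWbs hdet p
  have hbase := master n c₁ c₂ Vb Wb hVbs hWbs hVbper hWbper hcomm hdet δ₁ δ₂ hδ₁s hδ₂s
    hδ₁y hδ₁z hδ₂y hδ₂z hQ
  refine ⟨mkV (fun q => δ₁ q * (Vb q).1 + δ₂ q * (Vb q).2) Vb,
    mkV (fun q => δ₁ q * (Wb q).1 + δ₂ q * (Wb q).2) Wb, hbase, ?_⟩
  intro V' W'
  constructor
  · -- forward direction : LiftConds → ∃ β
    rintro ⟨hs1, hs2, hinv1, hinv2, hproj1, hproj2, hdx1, hdx2, hlie⟩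
    have hV'c := xconst V' hs1 hdx1
    have hW'c := xconst W' hs2 hdx2
    have hV'eq : V' = mkV (fun q : ℝ × ℝ => (V' ((0:ℝ), q)).1) Vb := by
      funext p
      refine Prod.ext ?_ (hproj1 p)
      show (V' p).1 = (V' ((0:ℝ), p.2)).1
      rw [hV'c p]
    have hW'eq : W' = mkV (fun q : ℝ × ℝ => (W' ((0:ℝ), q)).1) Wb := by
      funext p
      refine Prod.ext ?_ (hproj2 p)
      show (W' p).1 = (W' ((0:ℝ), p.2)).1
      rw [hW'c p]
    have hA's : ContDiff ℝ ∞ (fun q : ℝ × ℝ => (V' ((0:ℝ), q)).1) :=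
      contDiff_fst.comp (hs1.comp (contDiff_const.prodMk contDiff_id))
    have hB's : ContDiff ℝ ∞ (fun q : ℝ × ℝ => (W' ((0:ℝ), q)).1) :=
      contDiff_fst.comp (hs2.comp (contDiff_const.prodMk contDiff_id))
    have hA'd := hA's.differentiable (by simp)
    have hB'd := hB's.differentiable (by simp)
    rw [hV'eq] at hinv1
    rw [hW'eq] at hinv2
    obtain ⟨hA'1, hA'2⟩ := shifts_of_invariant n c₁ c₂ _ Vb hinv1
    obtain ⟨hB'1, hB'2⟩ := shifts_of_invariant n c₁ c₂ _ Wb hinv2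
    have hbr' : ∀ q : ℝ × ℝ, fderiv ℝ (fun q : ℝ × ℝ => (V' ((0:ℝ), q)).1) q (Wb q)
        - fderiv ℝ (fun q : ℝ × ℝ => (W' ((0:ℝ), q)).1) q (Vb q) = (n : ℝ) := by
      intro q
      have h := congrFun hlie ((0:ℝ), q)
      rw [hV'eq, hW'eq, lie3_mkV hA'd hB'd hVbd hWbd ((0:ℝ), q)] at h
      have h1 := congrArg Prod.fst h
      simpa using h1
    obtain ⟨β₁, β₂, hb1, hb2, hp1, hp2, hcl, hfV, hfW⟩ :=
      converse_beta n Vb Wb hVbs hWbs hVbper hWbper hcomm hdet δ₁ δ₂ hδ₁s hδ₂s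
        hδ₁y hδ₁z hδ₂y hδ₂z hQ _ _ hA's hB's hA'1 hA'2 hB'1 hB'2 hbr'
    refine ⟨β₁, β₂, hb1, hb2, hp1, hp2, hcl, ?_, ?_⟩
    · intro p
      rw [hV'eq]
      refine Prod.ext ?_ ?_
      · have h6 := hfV p.2
        simp only [mkV, Prod.fst_add, Prod.smul_fst, smul_eq_mul, mul_one]
        linarith
      · simp only [mkV, Prod.snd_add, Prod.smul_snd, Prod.mk_add_mk, smul_zero]
        show Vb p.2 = Vb p.2 + (β₁ p.2 * (Vb p.2).1 + β₂ p.2 * (Vb p.2).2) • ((0:ℝ), (0:ℝ))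
        simp
    · intro p
      rw [hW'eq]
      refine Prod.ext ?_ ?_
      · have h6 := hfW p.2
        simp only [mkV, Prod.fst_add, Prod.smul_fst, smul_eq_mul, mul_one]
        linarith
      · simp only [mkV, Prod.snd_add, Prod.smul_snd, Prod.mk_add_mk, smul_zero]
        show Wb p.2 = Wb p.2 + (β₁ p.2 * (Wb p.2).1 + β₂ p.2 * (Wb p.2).2) • ((0:ℝ), (0:ℝ))
        simp
  · -- backward direction : ∃ β → LiftConds
    rintro ⟨β₁, β₂, hb1, hb2, hp1, hp2, hcl, hfV, hfW⟩
    have hβ₁d : Differentiable ℝ β₁ := hb1.differentiable (by simp)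
    have hβ₂d : Differentiable ℝ β₂ := hb2.differentiable (by simp)
    have hδ₁d : Differentiable ℝ δ₁ := hδ₁s.differentiable (by simp)
    have hδ₂d : Differentiable ℝ δ₂ := hδ₂s.differentiable (by simp)
    have hV'eq : V' = mkV (fun q => (δ₁ q + β₁ q) * (Vb q).1 + (δ₂ q + β₂ q) * (Vb q).2) Vb := by
      funext p
      rw [hfV p]
      refine Prod.ext ?_ ?_
      · simp only [mkV, Prod.fst_add, Prod.smul_fst, smul_eq_mul, mul_one]
        ring
      · simp only [mkV, Prod.snd_add, Prod.smul_snd, smul_zero]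
        show Vb p.2 + (β₁ p.2 * (Vb p.2).1 + β₂ p.2 * (Vb p.2).2) • ((0:ℝ), (0:ℝ)) = Vb p.2
        simp
    have hW'eq : W' = mkV (fun q => (δ₁ q + β₁ q) * (Wb q).1 + (δ₂ q + β₂ q) * (Wb q).2) Wb := by
      funext p
      rw [hfW p]
      refine Prod.ext ?_ ?_
      · simp only [mkV, Prod.fst_add, Prod.smul_fst, smul_eq_mul, mul_one]
        ring
      · simp only [mkV, Prod.snd_add, Prod.smul_snd, smul_zero]
        show Wb p.2 + (β₁ p.2 * (Wb p.2).1 + β₂ p.2 * (Wb p.2).2) • ((0:ℝ), (0:ℝ)) = Wb p.2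
        simp
    rw [hV'eq, hW'eq]
    apply master n c₁ c₂ Vb Wb hVbs hWbs hVbper hWbper hcomm hdet
      (fun q => δ₁ q + β₁ q) (fun q => δ₂ q + β₂ q) (hδ₁s.add hb1) (hδ₂s.add hb2)
    · intro y z
      rw [hδ₁y, (hp1 y z).1]
    · intro y z
      rw [hδ₁z, (hp1 y z).2]
      ring
    · intro y z
      rw [hδ₂y, (hp2 y z).1]
    · intro y z
      rw [hδ₂z, (hp2 y z).2]
    · intro p
      have e1 : fderiv ℝ (fun q => δ₁ q + β₁ q) p = fderiv ℝ δ₁ p + fderiv ℝ β₁ p :=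
        fderiv_add (hδ₁d p) (hβ₁d p)
      have e2 : fderiv ℝ (fun q => δ₂ q + β₂ q) p = fderiv ℝ δ₂ p + fderiv ℝ β₂ p :=
        fderiv_add (hδ₂d p) (hβ₂d p)
      rw [e1, e2]
      simp only [ContinuousLinearMap.add_apply]
      have h1 := hQ p
      have h2 := hcl p
      linarith
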